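/- For all integers m ≥ 1 and k ≥ 1, s_{2m}(Z_2^{mk}) ≥ 2^k + 2m − 1. Equivalently: there exists a multiset of 2^k + 2m − 2 elements of Z_2^{mk} that contains no sub-multiset of size 2m whose elements sum to zero. -/

import Mathlib

open Finset Matrix

lemma powsum {F : Type*} [Field F] [CharP F 2] (m : ℕ) (B : Finset F)
    (hsum : ∀ i < m, ∑ v ∈ B, v ^ (2 * i + 1) = 0) :
    ∀ l, 1 ≤ l → l ≤ 2 * m → ∑ v ∈ B, v ^ l = 0 := by
  intro l
  induction l using Nat.strong_induction_on with
  | _ l ih =>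
    intro h1 h2
    rcases Nat.even_or_odd l with he | ho
    · obtain ⟨l', rfl⟩ := he
      have hl' : 1 ≤ l' := by omega
      have : ∑ v ∈ B, v ^ (l' + l') = (∑ v ∈ B, v ^ l') ^ 2 := by
        rw [sum_pow_char]
        exact Finset.sum_congr rfl fun v _ => by rw [← pow_mul]; ring_nf
      rw [this, ih l' (by omega) hl' (by omega)]
      ring
    · obtain ⟨i, rfl⟩ := ho
      exact hsum i (by omega)

lemma key {F : Type*} [Field F] [CharP F 2] (m : ℕ) (B : Finset F)
    (hne : B.Nonempty) (h0 : (0 : F) ∉ B) (hcard : B.card ≤ 2 * m)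
    (hsum : ∀ i < m, ∑ v ∈ B, v ^ (2 * i + 1) = 0) : False := by
  have hps := powsum m B hsum
  set j := B.card with hj
  have hjpos : 0 < j := hne.card_pos
  set b : Fin j → F := fun i => (B.equivFin.symm i : F) with hb
  have hbinj : Function.Injective b := fun i i' h => by
    apply B.equivFin.symm.injective; exact Subtype.ext h
  have hbmem : ∀ i, b i ∈ B := fun i => (B.equivFin.symm i).2
  have hbne : ∀ i, b i ≠ 0 := fun i h => h0 (h ▸ hbmem i)
  -- column sums of M vanish
  have hcol : ∀ l : Fin j, ∑ i : Fin j, b i ^ ((l : ℕ) + 1) = 0 := by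
    intro l
    have := hps ((l : ℕ) + 1) (by omega) (by omega)
    rw [← this]
    rw [← Finset.sum_coe_sort B (fun v => v ^ ((l : ℕ) + 1))]
    exact Fintype.sum_equiv B.equivFin.symm _ _ (fun i => rfl)
  set M : Matrix (Fin j) (Fin j) F := Matrix.of fun i l => b i * (vandermonde b) i l with hM
  have hdet : M.det ≠ 0 := by
    rw [hM, det_mul_column, det_vandermonde]
    refine mul_ne_zero (Finset.prod_ne_zero_iff.2 fun i _ => hbne i) ?_
    refine Finset.prod_ne_zero_iff.2 fun i _ => Finset.prod_ne_zero_iff.2 fun l hl => ?_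
    rw [sub_ne_zero]
    exact fun h => (Finset.mem_Ioi.mp hl).ne' (hbinj h)
  have hone : (fun _ : Fin j => (1 : F)) ᵥ* M = 0 := by
    funext l
    simp only [vecMul, dotProduct, one_mul, hM, Matrix.of_apply, vandermonde_apply, Pi.zero_apply]
    rw [← hcol l]
    exact Finset.sum_congr rfl fun i _ => by rw [← pow_succ']
  have hu : IsUnit M.det := isUnit_iff_ne_zero.2 hdet
  have : (fun _ : Fin j => (1 : F)) = 0 := by
    have := congrArg (fun u => u ᵥ* M⁻¹) hone
    simpa [Matrix.vecMul_vecMul, Matrix.mul_nonsing_inv M hu] using this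
  have := congrFun this ⟨0, hjpos⟩
  exact one_ne_zero this

theorem egz_lower_bound (m k : ℕ) (hm : 1 ≤ m) (hk : 1 ≤ k) :
    ∃ S : Multiset (Fin (m * k) → ZMod 2),
      Multiset.card S = 2 ^ k + 2 * m - 2 ∧
      ∀ T ≤ S, Multiset.card T = 2 * m → T.sum ≠ 0 := by
  classical
  haveI : Fact (Nat.Prime 2) := ⟨Nat.prime_two⟩
  set F := GaloisField 2 k with hF
  haveI : Fintype F := Fintype.ofFinite F
  have hcardF : Fintype.card F = 2 ^ k := by
    rw [← Nat.card_eq_fintype_card]; exact GaloisField.card 2 k (by omega)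
  set V := (Fin (m * k) → ZMod 2) with hV
  have hfr1 : Module.finrank (ZMod 2) (Fin m → F) = m * k := by
    rw [Module.finrank_pi_fintype (ZMod 2)]
    simp [GaloisField.finrank 2 (show k ≠ 0 by omega)]
    exact Or.inl (GaloisField.finrank 2 (show k ≠ 0 by omega))
  have hfr2 : Module.finrank (ZMod 2) V = m * k := by
    show Module.finrank (ZMod 2) (Fin (m * k) → ZMod 2) = m * k
    rw [Module.finrank_pi]; simp
  let e : (Fin m → F) ≃ₗ[ZMod 2] V := LinearEquiv.ofFinrankEq _ _ (hfr1.trans hfr2.symm)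
  let a : F → (Fin m → F) := fun v i => v ^ (2 * (i : ℕ) + 1)
  let f : F → V := fun v => e (a v)
  have hfinj : Function.Injective f := by
    intro v w h
    have h2 := e.injective h
    have := congrFun h2 ⟨0, hm⟩
    simpa [a] using this
  have hfne : ∀ v : F, v ≠ 0 → f v ≠ 0 := by
    intro v hv hf
    have h2 : a v = 0 := e.map_eq_zero_iff.mp hf
    have := congrFun h2 ⟨0, hm⟩
    simp [a] at this
    exact hv this
  set D : Multiset F := (Finset.univ.erase (0 : F)).val with hD
  have hDnodup : D.Nodup := (Finset.univ.erase (0 : F)).nodup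
  have hDmem : ∀ v ∈ D, v ≠ (0 : F) := fun v hv => (Finset.mem_erase.mp hv).1
  have hmapnodup : (D.map f).Nodup := hDnodup.map hfinj
  have h0notmap : (0 : V) ∉ D.map f := by
    intro h
    obtain ⟨v, hv, hfv⟩ := Multiset.mem_map.mp h
    exact hfne v (hDmem v hv) hfv
  refine ⟨Multiset.replicate (2 * m - 1) (0 : V) + D.map f, ?_, ?_⟩
  · rw [Multiset.card_add, Multiset.card_replicate, Multiset.card_map, hD]
    have : (Finset.univ.erase (0 : F)).val.card = 2 ^ k - 1 := by
      show (Finset.univ.erase (0 : F)).card = 2 ^ k - 1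
      rw [Finset.card_erase_of_mem (Finset.mem_univ _), Finset.card_univ, hcardF]
    rw [this]
    have h2k : 1 ≤ 2 ^ k := Nat.one_le_two_pow
    omega
  · intro T hT hcardT hsum0
    set S := Multiset.replicate (2 * m - 1) (0 : V) + D.map f with hS
    set T₁ := T.filter (· = (0 : V)) with hT₁
    set T₂ := T.filter (fun x => ¬ x = (0 : V)) with hT₂
    have hsplit : T₁ + T₂ = T := Multiset.filter_add_not _ T
    have hcount0S : Multiset.count (0 : V) S = 2 * m - 1 := by
      rw [hS, Multiset.count_add, Multiset.count_replicate, if_pos rfl,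
        Multiset.count_eq_zero.2 h0notmap]
      omega
    have hT₁rep : T₁ = Multiset.replicate (Multiset.card T₁) (0 : V) :=
      (Multiset.eq_replicate_card).2 fun b hb => by
        rw [hT₁] at hb; exact (Multiset.mem_filter.mp hb).2
    have hcT₁ : Multiset.card T₁ ≤ 2 * m - 1 := by
      have h1 : T₁ ≤ T := Multiset.filter_le _ T
      have h2 : Multiset.count (0 : V) T₁ ≤ Multiset.count (0 : V) S :=
        (Multiset.count_le_of_le _ (h1.trans hT))
      rw [hT₁rep, Multiset.count_replicate, if_pos rfl] at h2
      omega
    have hT₂le : T₂ ≤ T := Multiset.filter_le _ T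
    have hT₂nodup : T₂.Nodup := by
      rw [Multiset.nodup_iff_count_le_one]
      intro x
      by_cases hx : x = 0
      · subst hx
        have : (0 : V) ∉ T₂ := by
          rw [hT₂]; exact fun h => (Multiset.mem_filter.mp h).2 rfl
        rw [Multiset.count_eq_zero.2 this]; omega
      · have h1 : Multiset.count x T₂ ≤ Multiset.count x S :=
          Multiset.count_le_of_le _ (hT₂le.trans hT)
        have h2 : Multiset.count x S ≤ 1 := by
          rw [hS, Multiset.count_add, Multiset.count_replicate, if_neg (Ne.symm hx)]
          simpa using (Multiset.nodup_iff_count_le_one.mp hmapnodup) x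
        omega
    have hT₂mem : ∀ x ∈ T₂, ∃ v ∈ Finset.univ.erase (0 : F), f v = x := by
      intro x hx
      have hxS : x ∈ S := Multiset.mem_of_le (hT₂le.trans hT) hx
      have hx' := hx
      rw [hT₂] at hx'
      have hxne : x ≠ 0 := (Multiset.mem_filter.mp hx').2
      rcases Multiset.mem_add.mp hxS with h | h
      · exact absurd (Multiset.eq_of_mem_replicate h) hxne
      · obtain ⟨v, hv, hfv⟩ := Multiset.mem_map.mp h
        exact ⟨v, hv, hfv⟩
    set C := T₂.toFinset with hC
    have hCval : C.val = T₂ := Multiset.dedup_eq_self.2 hT₂nodup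
    set B : Finset F := (Finset.univ.erase (0 : F)).filter (fun v => f v ∈ T₂) with hB
    have hCB : C = B.image f := by
      ext x
      rw [Multiset.mem_toFinset]
      constructor
      · intro hx
        obtain ⟨v, hv, hfv⟩ := hT₂mem x hx
        exact Finset.mem_image.2 ⟨v, Finset.mem_filter.2 ⟨hv, hfv ▸ hx⟩, hfv⟩
      · intro hx
        obtain ⟨v, hv, hfv⟩ := Finset.mem_image.mp hx
        exact hfv ▸ (Finset.mem_filter.mp hv).2
    have hcardC : Multiset.card T₂ = B.card := by
      have h1 : C.card = Multiset.card T₂ := Multiset.toFinset_card_eq_card_iff_nodup.2 hT₂nodup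
      rw [← h1, hCB, Finset.card_image_of_injective _ hfinj]
    have hBsub : ∀ v ∈ B, v ≠ (0 : F) := fun v hv =>
      (Finset.mem_erase.mp (Finset.mem_filter.mp hv).1).1
    have hsumT₂ : T₂.sum = ∑ v ∈ B, f v := by
      have h1 : T₂.sum = ∑ x ∈ C, x := by
        rw [← hCval, Finset.sum]
        simp
      rw [h1, hCB, Finset.sum_image (fun v _ w _ h => hfinj h)]
    have hsumT : T.sum = ∑ v ∈ B, f v := by
      rw [← hsplit, Multiset.sum_add, hT₁rep, Multiset.sum_replicate, smul_zero, zero_add,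
        hsumT₂]
    have hsumB : ∑ v ∈ B, a v = 0 := by
      apply e.injective
      rw [map_sum, map_zero]
      exact hsumT ▸ hsum0
    have hcardB : 1 ≤ B.card ∧ B.card ≤ 2 * m := by
      have := Multiset.card_add T₁ T₂
      rw [hsplit, hcardT] at this
      constructor <;> omega
    have hBne : B.Nonempty := Finset.card_pos.mp (by omega)
    refine key m B hBne (fun h => hBsub 0 h rfl) hcardB.2 ?_
    intro i hi
    have := congrFun hsumB ⟨i, hi⟩
    rw [Finset.sum_apply] at this
    simpa [a] using this
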